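/- With the hypotheses of the previous fibering statement, the map T : S → (0,1] is continuous. In particular, if u_j → u in S and T(u) = 1, then T(u_j) → 1. -/
import Mathlib


open Set Filter Topology

/-- Continuity of the fibering map `T : S → (0,1]`; in particular if `u_j → u` on the
unit sphere and `T(u) = 1` then `T(u_j) → 1`. -/
theorem stmt3 {X : Type*} [NormedAddCommGroup X] [NormedSpace ℝ X]
    (E : X → ℝ) (hE : Continuous E)
    (φ' : X → ℝ → ℝ)
    (hC1 : ∀ u, ‖u‖ = 1 → (∀ t ∈ Ioc (0 : ℝ) 1, HasDerivAt (fun s : ℝ => E (s • u)) (φ' u t) t)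
      ∧ ContinuousOn (φ' u) (Ioc (0 : ℝ) 1))
    (hsmall : ∀ u, ‖u‖ = 1 → ∃ ε > 0, ∀ t : ℝ, 0 < t → t < ε → E (t • u) < 0)
    (hpos : ∀ u, ‖u‖ = 1 → ∀ t ∈ Ioc (0 : ℝ) 1, 0 ≤ E (t • u) → 0 < φ' u t)
    (T : X → ℝ)
    (hT : ∀ u, ‖u‖ = 1 → T u ∈ Ioc (0 : ℝ) 1 ∧
      (∀ t : ℝ, 0 < t → t < T u → E (t • u) < 0) ∧
      (∀ t : ℝ, T u < t → t ≤ 1 → 0 < E (t • u))) :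
    ContinuousOn T {u : X | ‖u‖ = 1} ∧
    ∀ (u : X), ‖u‖ = 1 → T u = 1 → ∀ u_j : ℕ → X, (∀ j, ‖u_j j‖ = 1) →
      Tendsto u_j atTop (𝓝 u) → Tendsto (fun j => T (u_j j)) atTop (𝓝 1) := by
  -- Two key local lemmas.
  have lemA : ∀ u : X, ‖u‖ = 1 → ∀ t : ℝ, 0 < t → t ≤ 1 → E (t • u) < 0 →
      ∃ δ > 0, ∀ v : X, ‖v‖ = 1 → dist v u < δ → t ≤ T v := by
    intro u hu t ht ht1 hneg
    have hcont : Continuous fun v : X => E (t • v) := hE.comp (continuous_const_smul t)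
    have hopen : IsOpen {v : X | E (t • v) < 0} := isOpen_lt hcont continuous_const
    obtain ⟨δ, hδ, hball⟩ := Metric.isOpen_iff.mp hopen u hneg
    refine ⟨δ, hδ, fun v hv hdv => ?_⟩
    have hvneg : E (t • v) < 0 := hball (Metric.mem_ball.mpr hdv)
    by_contra hlt
    push_neg at hlt
    exact absurd ((hT v hv).2.2 t hlt ht1) (not_lt.mpr hvneg.le)
  have lemB : ∀ u : X, ‖u‖ = 1 → ∀ t : ℝ, 0 < t → 0 < E (t • u) →
      ∃ δ > 0, ∀ v : X, ‖v‖ = 1 → dist v u < δ → T v ≤ t := by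
    intro u hu t ht hposE
    have hcont : Continuous fun v : X => E (t • v) := hE.comp (continuous_const_smul t)
    have hopen : IsOpen {v : X | 0 < E (t • v)} := isOpen_lt continuous_const hcont
    obtain ⟨δ, hδ, hball⟩ := Metric.isOpen_iff.mp hopen u hposE
    refine ⟨δ, hδ, fun v hv hdv => ?_⟩
    have hvpos : 0 < E (t • v) := hball (Metric.mem_ball.mpr hdv)
    by_contra hlt
    push_neg at hlt
    exact absurd ((hT v hv).2.1 t ht hlt) (not_lt.mpr hvpos.le)
  have hcontT : ContinuousOn T {u : X | ‖u‖ = 1} := by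
    intro u hu
    have hu' : ‖u‖ = 1 := hu
    obtain ⟨⟨hTu0, hTu1⟩, hTneg, hTpos⟩ := hT u hu'
    rw [Metric.continuousWithinAt_iff]
    intro ε hε
    -- lower bound
    set t₁ : ℝ := max (T u / 2) (T u - ε / 2) with ht₁def
    have ht₁pos : 0 < t₁ := lt_max_of_lt_left (by linarith)
    have ht₁lt : t₁ < T u := max_lt (by linarith) (by linarith)
    have hE₁ : E (t₁ • u) < 0 := hTneg t₁ ht₁pos ht₁lt
    obtain ⟨δ₁, hδ₁, h₁⟩ := lemA u hu' t₁ ht₁pos (ht₁lt.le.trans hTu1) hE₁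
    have hlow : T u - t₁ < ε := by
      have : T u - ε / 2 ≤ t₁ := le_max_right _ _
      linarith
    by_cases hTeq : T u = 1
    · refine ⟨δ₁, hδ₁, fun v hv hdv => ?_⟩
      have h1 : t₁ ≤ T v := h₁ v hv hdv
      have h2 : T v ≤ 1 := (hT v hv).1.2
      rw [Real.dist_eq]
      rw [abs_lt]
      constructor <;> [linarith; linarith]
    · have hTlt1 : T u < 1 := lt_of_le_of_ne hTu1 hTeq
      set t₂ : ℝ := min 1 (T u + ε / 2) with ht₂def
      have ht₂pos : 0 < t₂ := lt_min (by linarith) (by linarith)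
      have ht₂gt : T u < t₂ := lt_min hTlt1 (by linarith)
      have ht₂le : t₂ ≤ 1 := min_le_left _ _
      have hE₂ : 0 < E (t₂ • u) := hTpos t₂ ht₂gt ht₂le
      obtain ⟨δ₂, hδ₂, h₂⟩ := lemB u hu' t₂ ht₂pos hE₂
      refine ⟨min δ₁ δ₂, lt_min hδ₁ hδ₂, fun v hv hdv => ?_⟩
      have h1 : t₁ ≤ T v := h₁ v hv (hdv.trans_le (min_le_left _ _))
      have h2 : T v ≤ t₂ := h₂ v hv (hdv.trans_le (min_le_right _ _))
      have ht₂ub : t₂ ≤ T u + ε / 2 := min_le_right _ _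
      rw [Real.dist_eq, abs_lt]
      constructor <;> linarith
  refine ⟨hcontT, fun u hu hT1 u_j hj hjtend => ?_⟩
  have : Tendsto u_j atTop (𝓝[{u : X | ‖u‖ = 1}] u) :=
    tendsto_nhdsWithin_of_tendsto_nhds_of_eventually_within _ hjtend
      (Eventually.of_forall fun j => hj j)
  have := (hcontT u hu).tendsto.comp this
  rw [hT1] at this
  exact this
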